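/- Let n, m ≥ 1 and let X be the quotient of (ℂᵐ∖{0}) × (ℂⁿ∖{0}) by the ℂ*-action a·(v, w) = (a⁻¹v, a w). The assignment [v, w] ↦ [w] is a well-defined continuous surjective map q : X → ℙ^{n−1}(ℂ), and for every point p ∈ ℙ^{n−1}(ℂ) the fiber q⁻¹(p) is homeomorphic to ℂᵐ∖{0}. -/

import Mathlib

/-- The nonzero vectors of `ℂᵏ`, with the subspace topology. -/
abbrev NZ (k : ℕ) : Type := {v : Fin k → ℂ // v ≠ 0}

/-- The orbit relation of the `ℂ*`-action `a • (v, w) = (a⁻¹ v, a w)` on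
`(ℂᵐ ∖ {0}) × (ℂⁿ ∖ {0})`. -/
def scalarRel (m n : ℕ) : (NZ m × NZ n) → (NZ m × NZ n) → Prop := fun p q =>
  ∃ a : ℂˣ, (q.1 : Fin m → ℂ) = ((a⁻¹ : ℂˣ) : ℂ) • (p.1 : Fin m → ℂ) ∧
    (q.2 : Fin n → ℂ) = (a : ℂ) • (p.2 : Fin n → ℂ)

noncomputable instance (K V : Type*) [DivisionRing K] [AddCommGroup V] [Module K V]
    [TopologicalSpace V] : TopologicalSpace (Projectivization K V) :=
  inferInstanceAs (TopologicalSpace (Quotient (projectivizationSetoid K V)))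

/-- On the quotient `X` of `(ℂᵐ ∖ {0}) × (ℂⁿ ∖ {0})` by the `ℂ*`-action
`a • (v, w) = (a⁻¹ v, a w)`, the assignment `[v, w] ↦ [w]` is a well-defined continuous
surjection `q : X → ℙ^{n−1}(ℂ)`, and every fiber of `q` is homeomorphic to `ℂᵐ ∖ {0}`. -/
theorem fibration_over_projective_space (m n : ℕ) (hm : 1 ≤ m) (hn : 1 ≤ n) :
    ∃ q : Quot (scalarRel m n) → Projectivization ℂ (Fin n → ℂ),
      Continuous q ∧ Function.Surjective q ∧
      (∀ p : NZ m × NZ n,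
        q (Quot.mk _ p) = Projectivization.mk ℂ (p.2 : Fin n → ℂ) p.2.2) ∧
      (∀ pt : Projectivization ℂ (Fin n → ℂ),
        Nonempty ((q ⁻¹' {pt} : Set (Quot (scalarRel m n))) ≃ₜ NZ m)) := by
  classical
  have hlift : ∀ p q' : NZ m × NZ n, scalarRel m n p q' →
      Projectivization.mk ℂ (p.2 : Fin n → ℂ) p.2.2 =
      Projectivization.mk ℂ (q'.2 : Fin n → ℂ) q'.2.2 := by
    rintro p q' ⟨a, h1, h2⟩
    rw [Projectivization.mk_eq_mk_iff]
    refine ⟨a⁻¹, ?_⟩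
    rw [h2, Units.smul_def, smul_smul]
    simp
  have hone : (fun _ : Fin m => (1 : ℂ)) ≠ 0 := by
    intro h
    have := congrFun h ⟨0, hm⟩
    simp at this
  refine ⟨Quot.lift (fun p => Projectivization.mk ℂ (p.2 : Fin n → ℂ) p.2.2) hlift,
    ?_, ?_, fun p => rfl, ?_⟩
  · exact continuous_quot_lift _ (continuous_quotient_mk'.comp continuous_snd)
  · intro pt
    exact ⟨Quot.mk _ (⟨fun _ => 1, hone⟩, ⟨pt.rep, pt.rep_nonzero⟩), pt.mk_rep⟩
  · intro pt
    obtain ⟨i, hi⟩ : ∃ i, pt.rep i ≠ 0 := Function.ne_iff.mp pt.rep_nonzero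
    -- the invariant map
    have hGinv : ∀ p q' : NZ m × NZ n, scalarRel m n p q' →
        ((p.2 : Fin n → ℂ) i / pt.rep i) • (p.1 : Fin m → ℂ) =
        ((q'.2 : Fin n → ℂ) i / pt.rep i) • (q'.1 : Fin m → ℂ) := by
      rintro p q' ⟨a, h1, h2⟩
      rw [h1, h2]
      simp only [Pi.smul_apply, smul_eq_mul, smul_smul]
      congr 1
      field_simp
      rw [mul_assoc, Units.mul_inv, mul_one]
    let Ghat : Quot (scalarRel m n) → (Fin m → ℂ) :=
      Quot.lift (fun p => ((p.2 : Fin n → ℂ) i / pt.rep i) • (p.1 : Fin m → ℂ)) hGinv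
    have hGhatcont : Continuous Ghat := by
      apply continuous_quot_lift
      exact ((continuous_apply i).comp (continuous_subtype_val.comp continuous_snd)
        |>.div_const _).smul (continuous_subtype_val.comp continuous_fst)
    -- points in the fiber
    have hfib : ∀ p : NZ m × NZ n,
        Projectivization.mk ℂ (p.2 : Fin n → ℂ) p.2.2 = pt →
        ∃ a : ℂˣ, (p.2 : Fin n → ℂ) = (a : ℂ) • pt.rep := by
      intro p hp
      have : Projectivization.mk ℂ (p.2 : Fin n → ℂ) p.2.2 =
          Projectivization.mk ℂ pt.rep pt.rep_nonzero := hp.trans pt.mk_rep.symm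
      obtain ⟨a, ha⟩ := (Projectivization.mk_eq_mk_iff ℂ _ _ _ _).mp this
      exact ⟨a, by rw [← ha, Units.smul_def]⟩
    have hGne : ∀ x : Quot (scalarRel m n),
        Quot.lift (fun p => Projectivization.mk ℂ (p.2 : Fin n → ℂ) p.2.2) hlift x = pt →
        Ghat x ≠ 0 := by
      intro x hx
      obtain ⟨p, rfl⟩ := Quot.exists_rep x
      obtain ⟨a, ha⟩ := hfib p hx
      have h2 : (p.2 : Fin n → ℂ) i ≠ 0 := by
        rw [ha]
        simpa using mul_ne_zero a.ne_zero hi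
      exact smul_ne_zero (div_ne_zero h2 hi) p.1.2
    refine ⟨{
      toFun := fun x => ⟨Ghat x.1, hGne x.1 x.2⟩
      invFun := fun v => ⟨Quot.mk _ (v, ⟨pt.rep, pt.rep_nonzero⟩), pt.mk_rep⟩
      left_inv := ?_
      right_inv := ?_
      continuous_toFun := ((hGhatcont.comp continuous_subtype_val).subtype_mk _)
      continuous_invFun := ((continuous_quot_mk.comp (by continuity)).subtype_mk _) }⟩
    · rintro ⟨x, hx⟩
      obtain ⟨p, rfl⟩ := Quot.exists_rep x
      obtain ⟨a, ha⟩ := hfib p hx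
      apply Subtype.ext
      apply Quot.sound
      refine ⟨a, ?_, ha⟩
      have hval : Ghat (Quot.mk _ p) =
          ((p.2 : Fin n → ℂ) i / pt.rep i) • (p.1 : Fin m → ℂ) := rfl
      have hc : (p.2 : Fin n → ℂ) i / pt.rep i = (a : ℂ) := by
        rw [ha]
        simp only [Pi.smul_apply, smul_eq_mul]
        field_simp
      show (p.1 : Fin m → ℂ) = ((a⁻¹ : ℂˣ) : ℂ) • Ghat (Quot.mk _ p)
      rw [hval, hc, smul_smul]
      simp
    · intro v
      apply Subtype.ext
      show ((pt.rep i / pt.rep i) • (v : Fin m → ℂ)) = (v : Fin m → ℂ)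
      rw [div_self hi, one_smul]
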